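/- Let X and Y be measurable spaces, let μ and ν be probability measures on X, let κ be a Markov kernel from X to Y, and let ε ≥ 0 and δ ≥ 0. If μ(S) ≤ e^ε · ν(S) + δ for every measurable S ⊆ X, then the pushforward measures under κ satisfy (μ.bind κ)(S') ≤ e^ε · (ν.bind κ)(S') + δ for every measurable S' ⊆ Y, where (μ.bind κ)(S') = ∫ κ(x)(S') dμ(x). -/

import Mathlib

open MeasureTheory

/-- Post-processing preserves (ε, δ)-differential privacy: if `μ(S) ≤ e^ε ν(S) + δ` for
all measurable `S`, then the same holds for the pushforwards of `μ` and `ν` under any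
Markov kernel `κ`. -/
theorem stmt15 {X Y : Type*} [MeasurableSpace X] [MeasurableSpace Y]
    (μ ν : Measure X) [IsProbabilityMeasure μ] [IsProbabilityMeasure ν]
    (κ : ProbabilityTheory.Kernel X Y) [ProbabilityTheory.IsMarkovKernel κ]
    (ε δ : ℝ) (hε : 0 ≤ ε) (hδ : 0 ≤ δ)
    (h : ∀ S : Set X, MeasurableSet S →
      μ S ≤ ENNReal.ofReal (Real.exp ε) * ν S + ENNReal.ofReal δ) :
    ∀ S' : Set Y, MeasurableSet S' →
      (μ.bind fun x => κ x) S'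
        ≤ ENNReal.ofReal (Real.exp ε) * ((ν.bind fun x => κ x) S') + ENNReal.ofReal δ := by
  intro S' hS'
  -- the function x ↦ κ x S', as a real-valued function
  set f : X → ℝ := fun x => (κ x S').toReal with hf
  have hfm : Measurable f := (κ.measurable_coe hS').ennreal_toReal
  have hf0 : ∀ x, 0 ≤ f x := fun x => ENNReal.toReal_nonneg
  have hf1 : ∀ x, f x ≤ 1 := by
    intro x
    have : κ x S' ≤ 1 := prob_le_one
    simpa [hf] using ENNReal.toReal_le_of_le_ofReal zero_le_one (by simpa using this)
  have hofReal : ∀ x, ENNReal.ofReal (f x) = κ x S' := by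
    intro x
    exact ENNReal.ofReal_toReal (measure_ne_top _ _)
  -- rewrite the binds as lintegrals
  have hbind : ∀ (ρ : Measure X), (ρ.bind fun x => κ x) S' = ∫⁻ x, κ x S' ∂ρ := by
    intro ρ
    exact Measure.bind_apply hS' κ.measurable.aemeasurable
  -- layer cake for each measure
  have hlayer : ∀ (ρ : Measure X), ∫⁻ x, κ x S' ∂ρ
      = ∫⁻ t in Set.Ioi (0:ℝ), ρ {a | t < f a} := by
    intro ρ
    have := lintegral_eq_lintegral_meas_lt ρ
      (Filter.Eventually.of_forall hf0) hfm.aemeasurable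
    calc ∫⁻ x, κ x S' ∂ρ = ∫⁻ x, ENNReal.ofReal (f x) ∂ρ := by
          simp_rw [hofReal]
      _ = _ := this
  -- for t ≥ 1 the level sets are empty
  have hempty : ∀ t : ℝ, 1 ≤ t → {a | t < f a} = (∅ : Set X) := by
    intro t ht
    ext a
    simp only [Set.mem_setOf_eq, Set.mem_empty_iff_false, iff_false, not_lt]
    exact (hf1 a).trans ht
  -- restrict the integral to Ioc 0 1
  have hIoi : ∀ (ρ : Measure X), ∫⁻ t in Set.Ioi (0:ℝ), ρ {a | t < f a}
      = ∫⁻ t in Set.Ioc (0:ℝ) 1, ρ {a | t < f a} := by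
    intro ρ
    rw [← Set.Ioc_union_Ioi_eq_Ioi (zero_le_one (α := ℝ)),
      lintegral_union measurableSet_Ioi (Set.Ioc_disjoint_Ioi le_rfl)]
    have : ∫⁻ t in Set.Ioi (1:ℝ), ρ {a | t < f a} = 0 := by
      rw [setLIntegral_congr_fun measurableSet_Ioi
        (show Set.EqOn (fun t : ℝ => ρ {a | t < f a}) (fun _ => 0) (Set.Ioi 1) from (fun t ht => by
          show ρ {a | t < f a} = 0
          rw [hempty t (le_of_lt ht), measure_empty]))]
      simp
    rw [this, add_zero]
  rw [hbind, hbind, hlayer, hlayer, hIoi, hIoi]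
  -- now bound pointwise on Ioc 0 1
  have hmono : ∫⁻ t in Set.Ioc (0:ℝ) 1, μ {a | t < f a}
      ≤ ∫⁻ t in Set.Ioc (0:ℝ) 1,
          (ENNReal.ofReal (Real.exp ε) * ν {a | t < f a} + ENNReal.ofReal δ) := by
    refine lintegral_mono fun t => ?_
    exact h _ (measurableSet_lt measurable_const hfm)
  refine hmono.trans ?_
  rw [lintegral_add_right _ measurable_const, lintegral_const,
    lintegral_const_mul _ (by
      have hset : MeasurableSet {p : ℝ × X | p.1 < f p.2} :=
        measurableSet_lt measurable_fst (hfm.comp measurable_snd)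
      have := measurable_measure_prodMk_left (ν := ν) hset
      simpa using this)]
  have hvol : (volume.restrict (Set.Ioc (0:ℝ) 1)) Set.univ = 1 := by
    rw [Measure.restrict_apply_univ, Real.volume_Ioc]
    norm_num
  rw [hvol, mul_one]
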